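/- Let λ(p) = ∏_{i=1}^M (p − b_i)^{κ_i} exp(Σ_{k=1}^N c_k p^{−k}) and define the inner product (∂, ∂′) = Σ_{n=1}^{M+N} Res_{p=γ_n} [ ∂ log λ · ∂′ log λ / (d log λ/d log p) · d log p ], where γ_n are the M+N distinct critical points of log λ. Then (∂/∂b_i, ∂/∂b_j) = −δ_{ij} κ_i/b_i² and (∂/∂b_i, ∂/∂c_k) = δ_{kN} κ_i/(N b_i c_N). -/

import Mathlib

open Polynomial Finset

lemma lag_core {K : ℕ} (γ : Fin K → ℂ) (hγ : Function.Injective γ)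
    (P : ℂ[X]) (hP : P.degree < (K : ℕ)) :
    ∑ n, P.eval (γ n) / ∏ m ∈ univ.erase n, (γ n - γ m) = P.coeff (K - 1) := by
  have hinj : Set.InjOn γ (univ : Finset (Fin K)) := fun a _ c _ h => hγ h
  have hcard : #(univ : Finset (Fin K)) = K := by simp
  have h := Lagrange.eq_interpolate hinj (by rwa [hcard])
  have hb : ∀ n : Fin K, (Lagrange.basis univ γ n).coeff (K - 1)
      = (∏ m ∈ univ.erase n, (γ n - γ m))⁻¹ := by
    intro n
    have hbeq : Lagrange.basis univ γ n
        = C (∏ m ∈ univ.erase n, (γ n - γ m)⁻¹) * Lagrange.nodal (univ.erase n) γ := by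
      rw [Lagrange.basis, Lagrange.nodal, map_prod, ← prod_mul_distrib]
      rfl
    have hmon : (Lagrange.nodal (univ.erase n) γ).Monic := Lagrange.nodal_monic
    have hdeg : (Lagrange.nodal (univ.erase n) γ).natDegree = K - 1 := by
      rw [Lagrange.natDegree_nodal, card_erase_of_mem (mem_univ n), hcard]
    rw [hbeq, coeff_C_mul, ← hdeg, hmon.coeff_natDegree, mul_one, prod_inv_distrib]
  conv_rhs => rw [h]
  rw [Lagrange.interpolate_apply, finset_sum_coeff]
  refine Finset.sum_congr rfl fun n _ => ?_
  rw [coeff_C_mul, hb n, div_eq_mul_inv]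

lemma pole_sum {K : ℕ} (hK : 0 < K) (γ : Fin K → ℂ) (hγ : Function.Injective γ)
    (a : ℂ) (ha : ∀ n, γ n ≠ a) :
    ∑ n, (1 : ℂ) / ((γ n - a) * ∏ m ∈ univ.erase n, (γ n - γ m))
      = -1 / ∏ m, (a - γ m) := by
  set G : ℂ[X] := Lagrange.nodal univ γ with hG
  set P : ℂ[X] := G /ₘ (X - C a) with hP
  have hmonX : Monic (X - C a) := monic_X_sub_C a
  have hGdeg : G.natDegree = K := by rw [hG, Lagrange.natDegree_nodal]; simp
  have hsplit : G = (X - C a) * P + C (G.eval a) := by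
    conv_lhs => rw [← modByMonic_add_div G (X - C a)]
    rw [modByMonic_X_sub_C_eq_C_eval]; ring
  have hPdeg : P.natDegree = K - 1 := by
    rw [hP, natDegree_divByMonic G hmonX, hGdeg, natDegree_X_sub_C]
  have hGa : G.eval a = ∏ m, (a - γ m) := Lagrange.eval_nodal
  have hGa0 : G.eval a ≠ 0 := by
    rw [hGa]; exact prod_ne_zero_iff.mpr fun m _ => sub_ne_zero.mpr fun h => ha m h.symm
  have hPev : ∀ n, P.eval (γ n) = -G.eval a / (γ n - a) := by
    intro n
    have h0 : G.eval (γ n) = 0 := Lagrange.eval_nodal_at_node (mem_univ n)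
    have hne : γ n - a ≠ 0 := sub_ne_zero.mpr (ha n)
    have hc := congrArg (eval (γ n)) hsplit
    simp only [eval_add, eval_mul, eval_sub, eval_X, eval_C, h0] at hc
    field_simp
    linear_combination -hc
  have hPc : P.coeff (K - 1) = 1 := by
    have hc := congrArg (fun q => Polynomial.coeff q K) hsplit
    simp only [coeff_add, coeff_C, sub_mul, coeff_sub, coeff_C_mul] at hc
    have h2 : P.coeff K = 0 := coeff_eq_zero_of_natDegree_lt (by omega)
    have h1 : G.coeff K = 1 := by
      rw [← hGdeg]; exact (Lagrange.nodal_monic).coeff_natDegree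
    obtain ⟨K', rfl⟩ : ∃ K', K = K' + 1 := ⟨K - 1, by omega⟩
    rw [coeff_X_mul, h1, h2, if_neg (by omega)] at hc
    simpa using hc.symm
  have hprodne : ∀ n, ∏ m ∈ univ.erase n, (γ n - γ m) ≠ 0 := by
    intro n
    exact prod_ne_zero_iff.mpr fun m hm =>
      sub_ne_zero.mpr fun h => (mem_erase.mp hm).1 ((hγ h).symm)
  have hdeglt : P.degree < (K : ℕ) := by
    refine lt_of_le_of_lt degree_le_natDegree ?_
    exact_mod_cast (by omega : P.natDegree < K)
  calc ∑ n, (1:ℂ) / ((γ n - a) * ∏ m ∈ univ.erase n, (γ n - γ m))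
      = ∑ n, (P.eval (γ n) / ∏ m ∈ univ.erase n, (γ n - γ m)) * (-1 / G.eval a) := by
        refine sum_congr rfl fun n _ => ?_
        have hne : γ n - a ≠ 0 := sub_ne_zero.mpr (ha n)
        have hx := hprodne n
        rw [hPev n]
        field_simp
    _ = (∑ n, P.eval (γ n) / ∏ m ∈ univ.erase n, (γ n - γ m)) * (-1 / G.eval a) :=
        (sum_mul _ _ _).symm
    _ = -1 / ∏ m, (a - γ m) := by
        rw [lag_core γ hγ P hdeglt, hPc, one_mul, hGa]

lemma key_sum {K : ℕ} (hK : 0 < K) (γ : Fin K → ℂ) (hγ : Function.Injective γ)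
    (a : ℂ) (ha : ∀ n, γ n ≠ a) (R : ℂ[X]) (hR : R.natDegree < K) :
    ∑ n, R.eval (γ n) / ((γ n - a) * ∏ m ∈ univ.erase n, (γ n - γ m))
      = (R /ₘ (X - C a)).coeff (K - 1) - R.eval a / ∏ m, (a - γ m) := by
  set T : ℂ[X] := R /ₘ (X - C a) with hT
  have hmonX : Monic (X - C a) := monic_X_sub_C a
  have hsplit : R = (X - C a) * T + C (R.eval a) := by
    conv_lhs => rw [← modByMonic_add_div R (X - C a)]
    rw [modByMonic_X_sub_C_eq_C_eval]; ring
  have hprodne : ∀ n, ∏ m ∈ univ.erase n, (γ n - γ m) ≠ 0 := by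
    intro n
    exact prod_ne_zero_iff.mpr fun m hm =>
      sub_ne_zero.mpr fun h => (mem_erase.mp hm).1 ((hγ h).symm)
  have hTdeg : T.degree < (K : ℕ) := by
    refine lt_of_le_of_lt (degree_divByMonic_le R _) ?_
    refine lt_of_le_of_lt degree_le_natDegree ?_
    exact_mod_cast hR
  have hterm : ∀ n : Fin K,
      R.eval (γ n) / ((γ n - a) * ∏ m ∈ univ.erase n, (γ n - γ m))
        = T.eval (γ n) / ∏ m ∈ univ.erase n, (γ n - γ m)
          + R.eval a * (1 / ((γ n - a) * ∏ m ∈ univ.erase n, (γ n - γ m))) := by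
    intro n
    have hne : γ n - a ≠ 0 := sub_ne_zero.mpr (ha n)
    have hx := hprodne n
    have hev : R.eval (γ n) = (γ n - a) * T.eval (γ n) + R.eval a := by
      conv_lhs => rw [hsplit]
      simp [eval_add, eval_mul]
    rw [hev]
    field_simp
  rw [Finset.sum_congr rfl fun n _ => hterm n, Finset.sum_add_distrib,
    ← Finset.mul_sum, lag_core γ hγ T hTdeg, pole_sum hK γ hγ a ha]
  ring

/-- For λ(p) = ∏ (p − b_i)^{κ_i} exp(Σ_{k=1}^N c_k p^{−k}) with the M+N critical points
γ_n (roots of Q, where d log λ/dp = Q(p)/(p^{N+1} ∏ (p − b_i)), Q = M̃ ∏ (p − γ_n)),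
the inner product (∂, ∂′) = Σ_n Res_{p=γ_n}[∂logλ·∂′logλ·(dlogλ/dlogp)⁻¹ dlogp]
satisfies (∂/∂b_i, ∂/∂b_j) = −δ_{ij} κ_i/b_i² and
(∂/∂b_i, ∂/∂c_k) = δ_{kN} κ_i/(N b_i c_N).  (Here `c k` stands for c_{k+1}.) -/
theorem radial_metric_caseII (M N : ℕ) (hN : 1 ≤ N)
    (b κ : Fin M → ℂ) (c : Fin N → ℂ) (γ : Fin (M + N) → ℂ)
    (hb : Function.Injective b) (hb0 : ∀ i, b i ≠ 0) (hκ : ∀ i, κ i ≠ 0)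
    (hγinj : Function.Injective γ) (hγ0 : ∀ n, γ n ≠ 0) (hγb : ∀ n i, γ n ≠ b i)
    (Mt : ℂ) (hMt : Mt = ∑ i, κ i) (hMt0 : Mt ≠ 0)
    (cN : ℂ) (hcN : cN = c ⟨N - 1, by omega⟩) (hcN0 : cN ≠ 0)
    (hlog : ∀ p : ℂ, p ≠ 0 → (∀ i, p ≠ b i) →
      (∑ i, κ i / (p - b i))
          - ∑ k : Fin N, ((k : ℕ) + 1 : ℂ) * c k * p ^ (-(k : ℤ) - 2)
        = Mt * (∏ n, (p - γ n)) / (p ^ (N + 1) * ∏ i, (p - b i))) :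
    (∀ i j : Fin M,
      ∑ n, κ i * κ j * γ n ^ N * (∏ l, (γ n - b l)) /
          ((γ n - b i) * (γ n - b j) * γ n
            * deriv (fun p => Mt * ∏ n', (p - γ n')) (γ n))
        = -(if i = j then 1 else 0) * κ i / b i ^ 2)
    ∧ (∀ (i : Fin M) (k : Fin N),
      ∑ n, -(κ i) * γ n ^ N * (∏ l, (γ n - b l)) /
          ((γ n - b i) * γ n ^ ((k : ℕ) + 2)
            * deriv (fun p => Mt * ∏ n', (p - γ n')) (γ n))
        = (if (k : ℕ) + 1 = N then 1 else 0) * κ i / ((N : ℂ) * b i * cN)) := by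
  classical
  have hKpos : 0 < M + N := by omega
  have hPr : ∀ n, ∏ m ∈ univ.erase n, (γ n - γ m) ≠ 0 := by
    intro n
    exact prod_ne_zero_iff.mpr fun m hm =>
      sub_ne_zero.mpr fun h => (mem_erase.mp hm).1 ((hγinj h).symm)
  have hγbne : ∀ n i, γ n - b i ≠ 0 := fun n i => sub_ne_zero.mpr (hγb n i)
  have hbne : ∀ i : Fin M, ∏ l ∈ univ.erase i, (b i - b l) ≠ 0 := fun i =>
    prod_ne_zero_iff.mpr fun l hl =>
      sub_ne_zero.mpr fun h => (mem_erase.mp hl).1 ((hb h).symm)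
  have hderiv : ∀ n, deriv (fun p => Mt * ∏ n', (p - γ n')) (γ n)
      = Mt * ∏ m ∈ univ.erase n, (γ n - γ m) := by
    intro n
    have hfun : (fun p : ℂ => Mt * ∏ n', (p - γ n'))
        = fun p => (C Mt * Lagrange.nodal univ γ).eval p := by
      funext p; simp [Lagrange.eval_nodal]
    rw [hfun, Polynomial.deriv, derivative_mul, derivative_C]
    simp only [zero_mul, zero_add, eval_add, eval_mul, eval_C,
      Lagrange.eval_nodal_derivative_eval_node_eq (mem_univ n), Lagrange.eval_nodal]
  set Qp : ℂ[X] := C Mt * Lagrange.nodal univ γ with hQp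
  set Rp : ℂ[X] := (∑ i, C (κ i) * X ^ (N + 1) * Lagrange.nodal (univ.erase i) b)
    - ∑ k : Fin N, C (((k : ℕ) + 1 : ℂ) * c k) * X ^ (N - 1 - (k : ℕ))
        * Lagrange.nodal univ b with hRp
  have hQe : ∀ x : ℂ, Qp.eval x = Mt * ∏ m, (x - γ m) := by
    intro x; simp [hQp, Lagrange.eval_nodal]
  have hQR : Qp = Rp := by
    apply Polynomial.eq_of_infinite_eval_eq
    have hsub : ({0} ∪ Set.range b)ᶜ ⊆ { x : ℂ | Qp.eval x = Rp.eval x } := by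
      intro x hx
      simp only [Set.mem_compl_iff, Set.mem_union, Set.mem_singleton_iff,
        Set.mem_range, not_or, not_exists] at hx
      obtain ⟨hx0, hxb⟩ := hx
      have hxb' : ∀ i, x ≠ b i := fun i h => hxb i h.symm
      have hxbne : ∀ i, x - b i ≠ 0 := fun i => sub_ne_zero.mpr (hxb' i)
      have hD : x ^ (N + 1) * ∏ i, (x - b i) ≠ 0 :=
        mul_ne_zero (pow_ne_zero _ hx0) (prod_ne_zero_iff.mpr fun i _ => hxbne i)
      have hlx := hlog x hx0 hxb'
      rw [eq_div_iff hD] at hlx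
      show Qp.eval x = Rp.eval x
      rw [hQe x, ← hlx, hRp]
      simp only [eval_sub, eval_finset_sum, eval_mul, eval_C, eval_pow, eval_X,
        Lagrange.eval_nodal]
      rw [sub_mul, Finset.sum_mul, Finset.sum_mul]
      congr 1
      · refine sum_congr rfl fun i _ => ?_
        rw [← Finset.mul_prod_erase univ (fun l => x - b l) (mem_univ i)]
        have hxi := hxbne i
        field_simp
      · refine sum_congr rfl fun k _ => ?_
        have hzp : x ^ (-(k : ℤ) - 2) * x ^ (N + 1) = x ^ (N - 1 - (k : ℕ)) := by
          rw [← zpow_natCast x (N + 1), ← zpow_natCast x (N - 1 - (k : ℕ)),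
            ← zpow_add₀ hx0]
          congr 1
          have hk := k.isLt
          omega
        calc (((k : ℕ) : ℂ) + 1) * c k * x ^ (-(k : ℤ) - 2)
              * (x ^ (N + 1) * ∏ l, (x - b l))
            = (((k : ℕ) : ℂ) + 1) * c k * (x ^ (-(k : ℤ) - 2) * x ^ (N + 1))
              * ∏ l, (x - b l) := by ring
          _ = (((k : ℕ) : ℂ) + 1) * c k * x ^ (N - 1 - (k : ℕ)) * ∏ l, (x - b l) := by
              rw [hzp]
    exact Set.Infinite.mono hsub (Set.Finite.infinite_compl
      (Set.Finite.union (Set.finite_singleton 0) (Set.finite_range b)))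
  have hQb : ∀ i, Qp.eval (b i)
      = κ i * b i ^ (N + 1) * ∏ l ∈ univ.erase i, (b i - b l) := by
    intro i
    rw [hQR, hRp]
    simp only [eval_sub, eval_finset_sum, eval_mul, eval_C, eval_pow, eval_X,
      Lagrange.eval_nodal]
    have h2 : ∀ k : Fin N, (((k : ℕ) : ℂ) + 1) * c k * (b i) ^ (N - 1 - (k : ℕ))
        * ∏ l, (b i - b l) = 0 := fun k => by
      rw [Finset.prod_eq_zero (mem_univ i) (show b i - b i = 0 from sub_self _)]; ring
    rw [Finset.sum_congr rfl fun k _ => h2 k, Finset.sum_const, smul_zero, sub_zero]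
    rw [Finset.sum_eq_single i (fun i' _ hne => ?_) (fun h => absurd (mem_univ i) h)]
    rw [Finset.prod_eq_zero (mem_erase.mpr ⟨fun h => hne h.symm, mem_univ i⟩)
      (show b i - b i = 0 from sub_self _)]
    ring
  have hQ0 : Qp.eval 0 = -((N : ℂ) * cN) * ∏ l, ((0 : ℂ) - b l) := by
    rw [hQR, hRp]
    simp only [eval_sub, eval_finset_sum, eval_mul, eval_C, eval_pow, eval_X,
      Lagrange.eval_nodal]
    have h1 : ∀ i : Fin M, κ i * (0 : ℂ) ^ (N + 1)
        * ∏ l ∈ univ.erase i, ((0 : ℂ) - b l) = 0 := fun i => by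
      rw [zero_pow (by omega)]; ring
    rw [Finset.sum_congr rfl fun i _ => h1 i, Finset.sum_const, smul_zero, zero_sub]
    have hk0 : (⟨N - 1, by omega⟩ : Fin N) = ⟨N - 1, by omega⟩ := rfl
    rw [Finset.sum_eq_single (⟨N - 1, by omega⟩ : Fin N) (fun k _ hne => ?_)
      (fun h => absurd (mem_univ _) h)]
    · have he : N - 1 - ((⟨N - 1, by omega⟩ : Fin N) : ℕ) = 0 := by simp
      rw [he, pow_zero, hcN]
      have hNc : (((⟨N - 1, by omega⟩ : Fin N) : ℕ) : ℂ) + 1 = (N : ℂ) := by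
        have h' : ((⟨N - 1, by omega⟩ : Fin N) : ℕ) + 1 = N := by simp; omega
        exact_mod_cast congrArg (Nat.cast (R := ℂ)) h'
      rw [hNc]
      ring
    · have hkN : (k : ℕ) < N := k.isLt
      have hkne : (k : ℕ) ≠ N - 1 := fun h => hne (Fin.ext (by simpa using h))
      rw [zero_pow (by omega)]
      ring
  -- degree helper
  have hRdeg : ∀ (a : ℂ) (e : ℕ) (s : Finset (Fin M)),
      (C a * X ^ e * Lagrange.nodal s b).natDegree ≤ e + #s := by
    intro a e s
    refine le_trans natDegree_mul_le ?_
    refine add_le_add (le_trans natDegree_mul_le ?_) (le_of_eq Lagrange.natDegree_nodal)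
    simp
  have hcoeff : ∀ (R : ℂ[X]) (a : ℂ), 0 < M → R.natDegree ≤ M + N - 2 →
      (R /ₘ (X - C a)).coeff (M + N - 1) = 0 := by
    intro R a hM h
    refine coeff_eq_zero_of_degree_lt (lt_of_le_of_lt (degree_divByMonic_le _ _)
      (lt_of_le_of_lt degree_le_natDegree ?_))
    exact_mod_cast (by omega : R.natDegree < M + N - 1)
  constructor
  · -- part 1
    intro i j
    have hM : 0 < M := i.pos
    by_cases hij : i = j
    · subst hij
      set R : ℂ[X] := C (κ i * κ i) * X ^ (N - 1) * Lagrange.nodal (univ.erase i) b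
        with hR
      have hRd : R.natDegree ≤ M + N - 2 := by
        refine le_trans (hRdeg _ _ _) ?_
        rw [card_erase_of_mem (mem_univ i), card_univ, Fintype.card_fin]
        omega
      have hkey := key_sum hKpos γ hγinj (b i) (fun n => hγb n i) R (by omega)
      have hterm : ∀ n, κ i * κ i * γ n ^ N * (∏ l, (γ n - b l)) /
            ((γ n - b i) * (γ n - b i) * γ n
              * deriv (fun p => Mt * ∏ n', (p - γ n')) (γ n))
          = R.eval (γ n) / ((γ n - b i) * ∏ m ∈ univ.erase n, (γ n - γ m)) * Mt⁻¹ := by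
        intro n
        rw [hderiv n, hR]
        simp only [eval_mul, eval_C, eval_pow, eval_X, Lagrange.eval_nodal]
        rw [← Finset.mul_prod_erase univ (fun l => γ n - b l) (mem_univ i)]
        have hpow : γ n ^ N = γ n ^ (N - 1) * γ n := by
          rw [← pow_succ]; congr 1; omega
        rw [hpow]
        have h1 := hγbne n i
        have h2 := hγ0 n
        have h3 := hPr n
        have hB : (γ n - b i) * (γ n - b i) * γ n
            * (Mt * ∏ m ∈ univ.erase n, (γ n - γ m)) ≠ 0 :=
          mul_ne_zero (mul_ne_zero (mul_ne_zero h1 h1) h2) (mul_ne_zero hMt0 h3)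
        have hD : (γ n - b i) * (∏ m ∈ univ.erase n, (γ n - γ m)) * Mt ≠ 0 :=
          mul_ne_zero (mul_ne_zero h1 h3) hMt0
        rw [← div_eq_mul_inv, div_div, div_eq_div_iff hB hD]
        ring
      rw [Finset.sum_congr rfl fun n _ => hterm n, ← Finset.sum_mul, hkey,
        hcoeff R (b i) hM hRd, if_pos rfl]
      have hprodγ : ∏ m, (b i - γ m)
          = κ i * b i ^ (N + 1) * (∏ l ∈ univ.erase i, (b i - b l)) / Mt := by
        have h := (hQe (b i)).symm.trans (hQb i)
        rw [eq_div_iff hMt0]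
        linear_combination h
      have hRb : R.eval (b i)
          = κ i * κ i * b i ^ (N - 1) * ∏ l ∈ univ.erase i, (b i - b l) := by
        simp [hR, Lagrange.eval_nodal]
      rw [hprodγ, hRb]
      have hbp : b i ^ (N + 1) = b i ^ (N - 1) * b i ^ 2 := by
        rw [← pow_add]; congr 1; omega
      rw [hbp]
      have h4 := hbne i
      have h5 := hb0 i
      have h6 := hκ i
      have h7 : b i ^ (N - 1) ≠ 0 := pow_ne_zero _ h5
      have hY : κ i * (b i ^ (N - 1) * b i ^ 2) * (∏ l ∈ univ.erase i, (b i - b l)) * Mt ≠ 0 :=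
        mul_ne_zero (mul_ne_zero (mul_ne_zero h6 (mul_ne_zero h7 (pow_ne_zero 2 h5))) h4) hMt0
      rw [div_div_eq_mul_div, zero_sub, neg_mul, ← div_eq_mul_inv, div_div, ← neg_div,
        div_eq_div_iff hY (pow_ne_zero 2 h5)]
      ring
    · -- i ≠ j
      have hjmem : j ∈ univ.erase i := mem_erase.mpr ⟨fun h => hij h.symm, mem_univ j⟩
      have hM2 : 2 ≤ M := by
        have h1 : ({i, j} : Finset (Fin M)).card = 2 := card_pair hij
        have h2 := card_le_card (subset_univ ({i, j} : Finset (Fin M)))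
        rw [h1, card_univ, Fintype.card_fin] at h2
        exact h2
      set R : ℂ[X] := C (κ i * κ j) * X ^ N
          * Lagrange.nodal ((univ.erase i).erase j) b with hR
      have hRd : R.natDegree ≤ M + N - 2 := by
        refine le_trans (hRdeg _ _ _) ?_
        rw [card_erase_of_mem hjmem, card_erase_of_mem (mem_univ i), card_univ,
          Fintype.card_fin]
        omega
      have hkey := key_sum hKpos γ hγinj 0 (fun n => hγ0 n) R (by omega)
      have hterm : ∀ n, κ i * κ j * γ n ^ N * (∏ l, (γ n - b l)) /
            ((γ n - b i) * (γ n - b j) * γ n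
              * deriv (fun p => Mt * ∏ n', (p - γ n')) (γ n))
          = R.eval (γ n) / ((γ n - 0) * ∏ m ∈ univ.erase n, (γ n - γ m)) * Mt⁻¹ := by
        intro n
        rw [hderiv n, hR]
        simp only [eval_mul, eval_C, eval_pow, eval_X, Lagrange.eval_nodal]
        rw [← Finset.mul_prod_erase univ (fun l => γ n - b l) (mem_univ i),
          ← Finset.mul_prod_erase (univ.erase i) (fun l => γ n - b l) hjmem]
        have h1 := hγbne n i
        have h2 := hγbne n j
        have h3 := hγ0 n
        have h4 := hPr n
        have hB : (γ n - b i) * (γ n - b j) * γ n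
            * (Mt * ∏ m ∈ univ.erase n, (γ n - γ m)) ≠ 0 :=
          mul_ne_zero (mul_ne_zero (mul_ne_zero h1 h2) h3) (mul_ne_zero hMt0 h4)
        have hD : γ n - 0 ≠ 0 := by rw [sub_zero]; exact h3
        have hD' : (γ n - 0) * (∏ m ∈ univ.erase n, (γ n - γ m)) * Mt ≠ 0 :=
          mul_ne_zero (mul_ne_zero hD h4) hMt0
        rw [← div_eq_mul_inv, div_div, div_eq_div_iff hB hD']
        ring
      rw [Finset.sum_congr rfl fun n _ => hterm n, ← Finset.sum_mul, hkey,
        hcoeff R 0 hM hRd, if_neg hij]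
      have hR0 : R.eval 0 = 0 := by
        simp only [hR, eval_mul, eval_C, eval_pow, eval_X]
        rw [zero_pow (by omega : N ≠ 0)]
        ring
      rw [hR0]
      simp
  · -- part 2
    intro i k
    have hM : 0 < M := i.pos
    have hkN : (k : ℕ) < N := k.isLt
    set R : ℂ[X] := C (-(κ i)) * X ^ (N - 1 - (k : ℕ))
        * Lagrange.nodal (univ.erase i) b with hR
    have hRd : R.natDegree ≤ M + N - 2 := by
      refine le_trans (hRdeg _ _ _) ?_
      rw [card_erase_of_mem (mem_univ i), card_univ, Fintype.card_fin]
      omega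
    have hkey := key_sum hKpos γ hγinj 0 (fun n => hγ0 n) R (by omega)
    have hterm : ∀ n, -(κ i) * γ n ^ N * (∏ l, (γ n - b l)) /
          ((γ n - b i) * γ n ^ ((k : ℕ) + 2)
            * deriv (fun p => Mt * ∏ n', (p - γ n')) (γ n))
        = R.eval (γ n) / ((γ n - 0) * ∏ m ∈ univ.erase n, (γ n - γ m)) * Mt⁻¹ := by
      intro n
      rw [hderiv n, hR]
      simp only [eval_mul, eval_C, eval_pow, eval_X, Lagrange.eval_nodal]
      rw [← Finset.mul_prod_erase univ (fun l => γ n - b l) (mem_univ i)]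
      have hp1 : γ n ^ N = γ n ^ (N - 1 - (k : ℕ)) * γ n ^ ((k : ℕ) + 1) := by
        rw [← pow_add]; congr 1; omega
      have hp2 : γ n ^ ((k : ℕ) + 2) = γ n ^ ((k : ℕ) + 1) * γ n := by
        rw [← pow_succ]
      rw [hp1, hp2]
      have h1 := hγbne n i
      have h2 := hγ0 n
      have h3 := hPr n
      have hB : (γ n - b i) * (γ n ^ ((k : ℕ) + 1) * γ n)
          * (Mt * ∏ m ∈ univ.erase n, (γ n - γ m)) ≠ 0 :=
        mul_ne_zero (mul_ne_zero h1 (mul_ne_zero (pow_ne_zero _ h2) h2))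
          (mul_ne_zero hMt0 h3)
      have hD : γ n - 0 ≠ 0 := by rw [sub_zero]; exact h2
      have hD' : (γ n - 0) * (∏ m ∈ univ.erase n, (γ n - γ m)) * Mt ≠ 0 :=
        mul_ne_zero (mul_ne_zero hD h3) hMt0
      rw [← div_eq_mul_inv, div_div, div_eq_div_iff hB hD']
      ring
    rw [Finset.sum_congr rfl fun n _ => hterm n, ← Finset.sum_mul, hkey,
      hcoeff R 0 hM hRd]
    have hprodγ : ∏ m, ((0 : ℂ) - γ m) = -((N : ℂ) * cN) * (∏ l, ((0 : ℂ) - b l)) / Mt := by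
      have h := (hQe 0).symm.trans hQ0
      rw [eq_div_iff hMt0]
      linear_combination h
    rw [hprodγ]
    have hPe0 : ∏ l ∈ univ.erase i, ((0 : ℂ) - b l) ≠ 0 :=
      prod_ne_zero_iff.mpr fun l _ => sub_ne_zero.mpr fun h => hb0 l h.symm
    have hprodb : ∏ l, ((0 : ℂ) - b l) = (0 - b i) * ∏ l ∈ univ.erase i, ((0 : ℂ) - b l) :=
      (Finset.mul_prod_erase univ (fun l => (0 : ℂ) - b l) (mem_univ i)).symm
    have hNne : (N : ℂ) ≠ 0 := Nat.cast_ne_zero.mpr (by omega)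
    by_cases hk : (k : ℕ) + 1 = N
    · rw [if_pos hk]
      have hR0 : R.eval 0 = -(κ i) * ∏ l ∈ univ.erase i, ((0 : ℂ) - b l) := by
        have he : N - 1 - (k : ℕ) = 0 := by omega
        rw [hR, he]
        simp only [eval_mul, eval_C, eval_pow, eval_X, Lagrange.eval_nodal, pow_zero,
          eval_one, zero_sub]
        ring
      rw [hR0, hprodb]
      have h5 := hb0 i
      have h6 := hκ i
      have hbi0 : (0 : ℂ) - b i ≠ 0 := sub_ne_zero.mpr fun h => h5 h.symm
      have hY : -((N : ℂ) * cN) * ((0 - b i) * ∏ l ∈ univ.erase i, ((0 : ℂ) - b l)) * Mt ≠ 0 :=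
        mul_ne_zero (mul_ne_zero (neg_ne_zero.mpr (mul_ne_zero hNne hcN0))
          (mul_ne_zero hbi0 hPe0)) hMt0
      have hZ : (N : ℂ) * b i * cN ≠ 0 := mul_ne_zero (mul_ne_zero hNne h5) hcN0
      rw [div_div_eq_mul_div, zero_sub, neg_mul, ← div_eq_mul_inv, div_div, ← neg_div,
        div_eq_div_iff hY hZ]
      ring
    · rw [if_neg hk]
      have hR0 : R.eval 0 = 0 := by
        simp only [hR, eval_mul, eval_C, eval_pow, eval_X]
        rw [zero_pow (by omega : N - 1 - (k : ℕ) ≠ 0)]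
        ring
      rw [hR0]
      simp
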